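/- If F is a real 2n×2n symplectic matrix with n×n block decomposition F = [[A, B],[C, D]], then the complex n×n matrix U = A + iB is invertible. -/

import Mathlib

open Matrix

noncomputable section

/-- The standard symplectic matrix J = [[0, I], [-I, 0]]. -/
def J (n : ℕ) : Matrix (Fin n ⊕ Fin n) (Fin n ⊕ Fin n) ℝ :=
  Matrix.fromBlocks 0 1 (-1) 0

/-- If F is a real 2n×2n symplectic matrix with block decomposition
F = [[A,B],[C,D]], then U = A + iB is invertible over ℂ. -/
theorem stmt_0 (n : ℕ) (F : Matrix (Fin n ⊕ Fin n) (Fin n ⊕ Fin n) ℝ)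
    (hF : Fᵀ * J n * F = J n) :
    IsUnit ((F.toBlocks₁₁).map (Complex.ofReal) +
      Complex.I • (F.toBlocks₁₂).map (Complex.ofReal)) := by
  have hJJ : _root_.J n * _root_.J n = -1 := by
    ext (i|i) (j|j) <;>
      simp [_root_.J, Matrix.fromBlocks_multiply, Matrix.one_apply, Matrix.neg_apply]
  have hJ1 : _root_.J n * -(_root_.J n) = 1 := by rw [mul_neg, hJJ, neg_neg]
  have hdetJ : IsUnit (_root_.J n).det := by
    refine IsUnit.of_mul_eq_one (-(_root_.J n)).det ?_
    rw [← Matrix.det_mul, hJ1, Matrix.det_one]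
  have hdetF : IsUnit F.det := by
    have h := congrArg Matrix.det hF
    rw [Matrix.det_mul, Matrix.det_mul, Matrix.det_transpose] at h
    have h2 : (_root_.J n).det = F.det * ((_root_.J n).det * F.det) := by
      linear_combination -h
    exact isUnit_of_mul_isUnit_left (h2 ▸ hdetJ)
  have hFunit : IsUnit F := (Matrix.isUnit_iff_isUnit_det F).mpr hdetF
  have hFinv : F * F⁻¹ = 1 := Matrix.mul_nonsing_inv F hdetF
  -- F * J * Fᵀ = J
  have hT : Fᵀ = -(_root_.J n * F⁻¹ * _root_.J n) := by
    have e1 : Fᵀ * _root_.J n = _root_.J n * F⁻¹ := by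
      calc Fᵀ * _root_.J n = Fᵀ * _root_.J n * F * F⁻¹ := by rw [mul_assoc, hFinv, mul_one]
        _ = _root_.J n * F⁻¹ := by rw [hF]
    calc Fᵀ = -(Fᵀ * (_root_.J n * _root_.J n)) := by rw [hJJ, mul_neg_one, neg_neg]
      _ = -(Fᵀ * _root_.J n * _root_.J n) := by rw [mul_assoc]
      _ = -(_root_.J n * F⁻¹ * _root_.J n) := by rw [e1]
  have hFJFT : F * _root_.J n * Fᵀ = _root_.J n := by
    rw [hT]
    calc F * _root_.J n * -(_root_.J n * F⁻¹ * _root_.J n)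
        = -(F * (_root_.J n * _root_.J n) * F⁻¹ * _root_.J n) := by
          simp only [mul_neg, mul_assoc]
      _ = F * F⁻¹ * _root_.J n := by rw [hJJ]; simp [mul_assoc]
      _ = _root_.J n := by rw [hFinv, one_mul]
  -- block relations
  set A := F.toBlocks₁₁ with hA
  set B := F.toBlocks₁₂ with hB
  set C := F.toBlocks₂₁ with hC
  set D := F.toBlocks₂₂ with hD
  have hFB : F = Matrix.fromBlocks A B C D := (Matrix.fromBlocks_toBlocks F).symm
  have key := hFJFT
  rw [hFB, _root_.J, Matrix.fromBlocks_transpose, Matrix.fromBlocks_multiply,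
    Matrix.fromBlocks_multiply] at key
  have h11 := congrArg Matrix.toBlocks₁₁ key
  have h12 := congrArg Matrix.toBlocks₁₂ key
  simp only [Matrix.toBlocks_fromBlocks₁₁, Matrix.toBlocks_fromBlocks₁₂] at h11 h12
  simp only [mul_zero, zero_add, add_zero, mul_one, mul_neg_one, neg_mul] at h11 h12
  have hAB : A * Bᵀ = B * Aᵀ := (neg_add_eq_zero.mp h11).symm
  have hAD : A * Dᵀ - B * Cᵀ = 1 := by rwa [neg_add_eq_sub] at h12
  -- S = A Aᵀ + B Bᵀ has nonzero determinant
  set S : Matrix (Fin n) (Fin n) ℝ := A * Aᵀ + B * Bᵀ with hS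
  have hSdet : S.det ≠ 0 := by
    intro h0
    obtain ⟨x, hx, hxS⟩ := Matrix.exists_mulVec_eq_zero_iff.mpr h0
    have e : ∀ M : Matrix (Fin n) (Fin n) ℝ,
        x ⬝ᵥ ((M * Mᵀ) *ᵥ x) = (Mᵀ *ᵥ x) ⬝ᵥ (Mᵀ *ᵥ x) := by
      intro M
      rw [← Matrix.mulVec_mulVec, Matrix.dotProduct_mulVec, ← Matrix.mulVec_transpose]
    have h1 : (Aᵀ *ᵥ x) ⬝ᵥ (Aᵀ *ᵥ x) + (Bᵀ *ᵥ x) ⬝ᵥ (Bᵀ *ᵥ x) = 0 := by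
      have h1 : x ⬝ᵥ (S *ᵥ x) = 0 := by rw [hxS, dotProduct_zero]
      rw [hS, Matrix.add_mulVec, dotProduct_add, e A, e B] at h1
      exact h1
    have hnn : ∀ w : Fin n → ℝ, 0 ≤ w ⬝ᵥ w := fun w =>
      Finset.sum_nonneg fun i _ => mul_self_nonneg (w i)
    have hAx : Aᵀ *ᵥ x = 0 := by
      have := le_antisymm (by nlinarith [hnn (Bᵀ *ᵥ x)]) (hnn (Aᵀ *ᵥ x))
      exact dotProduct_self_eq_zero.mp this
    have hBx : Bᵀ *ᵥ x = 0 := by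
      have := le_antisymm (by nlinarith [hnn (Aᵀ *ᵥ x)]) (hnn (Bᵀ *ᵥ x))
      exact dotProduct_self_eq_zero.mp this
    have hu : Sum.elim x (0 : Fin n → ℝ) ᵥ* F = 0 := by
      rw [hFB, Matrix.vecMul_fromBlocks, Sum.elim_comp_inl, Sum.elim_comp_inr,
        Matrix.zero_vecMul, Matrix.zero_vecMul, add_zero, add_zero,
        ← Matrix.mulVec_transpose A, ← Matrix.mulVec_transpose B, hAx, hBx]
      funext j; cases j <;> simp
    have hx0 : Sum.elim x (0 : Fin n → ℝ) = 0 := by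
      have h2 := congrArg (fun w => w ᵥ* F⁻¹) hu
      simpa [Matrix.vecMul_vecMul, hFinv, Matrix.vecMul_one, Matrix.zero_vecMul] using h2
    exact hx (funext fun i => congrFun hx0 (Sum.inl i))
  -- complex part
  set Ac := A.map Complex.ofReal with hAc
  set Bc := B.map Complex.ofReal with hBc
  set φ := (Complex.ofRealHom.mapMatrix : Matrix (Fin n) (Fin n) ℝ →+* Matrix (Fin n) (Fin n) ℂ)
    with hφ
  have hφa : ∀ X : Matrix (Fin n) (Fin n) ℝ, φ X = X.map Complex.ofReal := fun X => by
    rw [hφ, RingHom.mapMatrix_apply]; rfl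
  have hABc : Ac * Bᵀ.map Complex.ofReal = Bc * Aᵀ.map Complex.ofReal := by
    have h := congrArg φ hAB
    rw [_root_.map_mul, _root_.map_mul, hφa, hφa, hφa, hφa] at h
    exact h
  set U := Ac + Complex.I • Bc with hU
  set V := Aᵀ.map Complex.ofReal - Complex.I • Bᵀ.map Complex.ofReal with hV
  have hUV : U * V = φ S := by
    have hSm : φ S = Ac * Aᵀ.map Complex.ofReal + Bc * Bᵀ.map Complex.ofReal := by
      rw [hS, map_add, _root_.map_mul, _root_.map_mul, hφa, hφa, hφa, hφa]
    rw [hU, hV, hSm]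
    rw [add_mul, mul_sub, mul_sub, smul_mul_assoc, smul_mul_assoc, mul_smul_comm,
      mul_smul_comm, smul_smul, Complex.I_mul_I, hABc, neg_smul, one_smul, sub_neg_eq_add]
    abel
  have hdetU : IsUnit U.det := by
    have hd : U.det * V.det = ((S.det : ℝ) : ℂ) := by
      rw [← Matrix.det_mul, hUV, hφ, ← RingHom.map_det]; rfl
    have : IsUnit (U.det * V.det) := by
      rw [hd]; exact isUnit_iff_ne_zero.mpr (by exact_mod_cast hSdet)
    exact isUnit_of_mul_isUnit_left this
  exact (Matrix.isUnit_iff_isUnit_det U).mpr hdetU
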